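/- arXiv:1508.05293 — 5 statements merged into one kernel-verified Lean document; each statement's English description precedes it below -/
import Mathlib

section
/- For positive integers n and b with gcd(n+1, b) = 1, the identity sum_{i=1}^{b-1} ((b-i)/2) * floor(i(n+1)/b) * (1 + floor(i(n+1)/b)) = n(b^2-1)(n+2)/24 holds. -/
open Finset

private lemma sum_cast_id (b : ℕ) :
    ∑ i ∈ Finset.range b, (i : ℚ) = b * ((b : ℚ) - 1) / 2 := by
  induction b with
  | zero => simp
  | succ k ih => rw [Finset.sum_range_succ, ih]; push_cast; ring

private lemma sum_cast_sq (b : ℕ) :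
    ∑ i ∈ Finset.range b, (i : ℚ) ^ 2
      = b * ((b : ℚ) - 1) * (2 * (b : ℚ) - 1) / 6 := by
  induction b with
  | zero => simp
  | succ k ih => rw [Finset.sum_range_succ, ih]; push_cast; ring

/-- `i ↦ i * m % b` permutes `Icc 1 (b-1)` when `gcd m b = 1`. -/
private lemma sum_mod_perm (b m : ℕ) (hb : 0 < b) (h : Nat.Coprime m b)
    (g : ℕ → ℚ) :
    ∑ i ∈ Finset.Icc 1 (b - 1), g (i * m % b)
      = ∑ i ∈ Finset.Icc 1 (b - 1), g i := by
  have hinj : ∀ x ∈ Finset.Icc 1 (b - 1), ∀ y ∈ Finset.Icc 1 (b - 1),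
      x * m % b = y * m % b → x = y := by
    intro x hx y hy hxy
    simp only [Finset.mem_Icc] at hx hy
    have hmc : Nat.Coprime m b := h
    have hmod : x ≡ y [MOD b] :=
      Nat.ModEq.cancel_right_of_coprime (by simpa [Nat.Coprime] using hmc.symm) hxy
    have hx' : x % b = x := Nat.mod_eq_of_lt (by omega)
    have hy' : y % b = y := Nat.mod_eq_of_lt (by omega)
    have := hmod
    unfold Nat.ModEq at this
    omega
  have himg : (Finset.Icc 1 (b - 1)).image (fun i => i * m % b)
      = Finset.Icc 1 (b - 1) := by
    apply Finset.eq_of_subset_of_card_le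
    · intro j hj
      simp only [Finset.mem_image] at hj
      obtain ⟨i, hi, rfl⟩ := hj
      simp only [Finset.mem_Icc] at hi ⊢
      have hlt : i * m % b < b := Nat.mod_lt _ hb
      have hne : i * m % b ≠ 0 := by
        intro h0
        have hdvd : b ∣ i * m := Nat.dvd_of_mod_eq_zero h0
        have : b ∣ i := (Nat.Coprime.dvd_of_dvd_mul_right (h.symm)) hdvd
        have := Nat.le_of_dvd (by omega) this
        omega
      omega
    · rw [Finset.card_image_of_injOn (fun x hx y hy => hinj x hx y hy)]
  conv_rhs => rw [← himg]
  rw [Finset.sum_image hinj]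

/-- Floor-sum identity in type `A_n`:
`∑_{i=1}^{b-1} ((b-i)/2) ⌊i(n+1)/b⌋ (1+⌊i(n+1)/b⌋) = n(b²-1)(n+2)/24`. -/
theorem floor_sum_identity_typeA (n b : ℕ) (hn : 0 < n) (hb : 0 < b)
    (h : Nat.Coprime (n + 1) b) :
    ∑ i ∈ Finset.Icc 1 (b - 1),
        ((b : ℚ) - i) / 2 * ((i * (n + 1) / b : ℕ) : ℚ) * (1 + ((i * (n + 1) / b : ℕ) : ℚ))
      = (n : ℚ) * ((b : ℚ) ^ 2 - 1) * ((n : ℚ) + 2) / 24 := by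
  set m := n + 1 with hm
  have hbQ : (b : ℚ) ≠ 0 := Nat.cast_ne_zero.mpr (by omega)
  -- basic facts about q i = i*m/b and r i = i*m % b for i ∈ Icc 1 (b-1)
  have hr_pos : ∀ i, 1 ≤ i → i ≤ b - 1 → 1 ≤ i * m % b := by
    intro i h1 h2
    rcases Nat.eq_zero_or_pos (i * m % b) with h0 | h1'
    · exfalso
      have hdvd : b ∣ i * m := Nat.dvd_of_mod_eq_zero h0
      have : b ∣ i := (Nat.Coprime.dvd_of_dvd_mul_right (h.symm)) hdvd
      have := Nat.le_of_dvd (by omega) this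
      omega
    · exact h1'
  have hq_lt : ∀ i, i ≤ b - 1 → i * m / b < m := by
    intro i hi
    rw [Nat.div_lt_iff_lt_mul (by omega)]
    have hm0 : 0 < m := by omega
    have h1 : i * m < b * m := Nat.mul_lt_mul_of_pos_right (by omega) hm0
    rwa [mul_comm b m] at h1
  -- reflection: ⌊(b-i)m/b⌋ = m - 1 - ⌊im/b⌋
  have hrefl : ∀ i, 1 ≤ i → i ≤ b - 1 → (b - i) * m / b = m - 1 - i * m / b := by
    intro i h1 h2
    have hdm : b * (i * m / b) + i * m % b = i * m := Nat.div_add_mod _ _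
    have hr1 : 1 ≤ i * m % b := hr_pos i h1 h2
    have hr2 : i * m % b < b := Nat.mod_lt _ (by omega)
    have hq : i * m / b < m := hq_lt i h2
    set q := i * m / b with hqdef
    set r := i * m % b with hrdef
    have hdmz : (b : ℤ) * q + r = i * m := by exact_mod_cast hdm
    have key : (b - i) * m = (b - r) + b * (m - 1 - q) := by
      have hib : i ≤ b := by omega
      have hmz : (m : ℤ) = (n : ℤ) + 1 := by rw [hm]; push_cast; ring
      zify [hib, hr2.le, show q ≤ m - 1 by omega, show 1 ≤ m by omega]
      linear_combination hdmz
    rw [key, Nat.add_mul_div_left _ _ (show 0 < b by omega),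
      Nat.div_eq_of_lt (by omega), Nat.zero_add]
  -- cast formula for q
  have hqcast : ∀ i : ℕ, ((i * m / b : ℕ) : ℚ)
      = ((i : ℚ) * m - ((i * m % b : ℕ) : ℚ)) / b := by
    intro i
    have hdm : b * (i * m / b) + i * m % b = i * m := Nat.div_add_mod _ _
    have hc : (b : ℚ) * ((i * m / b : ℕ) : ℚ) + ((i * m % b : ℕ) : ℚ)
        = (i : ℚ) * m := by exact_mod_cast congrArg (Nat.cast : ℕ → ℚ) hdm
    field_simp
    linarith
  -- Step 1: reflected form of the sum
  set S := ∑ i ∈ Finset.Icc 1 (b - 1),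
      ((b : ℚ) - i) / 2 * ((i * m / b : ℕ) : ℚ) * (1 + ((i * m / b : ℕ) : ℚ)) with hS
  have hstep1 : S = ∑ i ∈ Finset.Icc 1 (b - 1),
      (i : ℚ) / 2 * ((m : ℚ) - 1 - ((i * m / b : ℕ) : ℚ))
        * ((m : ℚ) - ((i * m / b : ℕ) : ℚ)) := by
    rw [hS]
    apply Finset.sum_nbij' (i := fun i => b - i) (j := fun i => b - i)
    · intro a ha; simp only [Finset.mem_Icc] at ha ⊢; omega
    · intro a ha; simp only [Finset.mem_Icc] at ha ⊢; omega
    · intro a ha; simp only [Finset.mem_Icc] at ha; omega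
    · intro a ha; simp only [Finset.mem_Icc] at ha; omega
    · intro a ha
      simp only [Finset.mem_Icc] at ha
      have h2 : (b - a) * m / b = m - 1 - a * m / b := hrefl a ha.1 ha.2
      have hq : a * m / b < m := hq_lt a ha.2
      have hcast1 : ((b - a : ℕ) : ℚ) = (b : ℚ) - a := by
        have hab : a ≤ b := by omega
        push_cast [hab]; ring
      have hcast2 : ((m - 1 - a * m / b : ℕ) : ℚ)
          = (m : ℚ) - 1 - ((a * m / b : ℕ) : ℚ) := by
        have h3 : a * m / b ≤ m - 1 := by omega
        push_cast [h3, show 1 ≤ m by omega]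
        ring
      rw [h2, hcast2, hcast1]
      ring
  -- Step 2: add the two forms; the Dedekind-like cross terms cancel
  have hstep2 : S + S
      = (∑ i ∈ Finset.Icc 1 (b - 1),
          (((i * m % b : ℕ) : ℚ) ^ 2 / (2 * b) - ((i * m % b : ℕ) : ℚ) / 2))
        + ∑ i ∈ Finset.Icc 1 (b - 1),
          ((m : ℚ) ^ 2 * i / 2 - (m : ℚ) ^ 2 * (i : ℚ) ^ 2 / (2 * b)) := by
    nth_rewrite 2 [hstep1]
    rw [hS, ← Finset.sum_add_distrib, ← Finset.sum_add_distrib]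
    apply Finset.sum_congr rfl
    intro i _
    rw [hqcast i]
    field_simp
    ring
  -- Step 3: evaluate the r-sums via the permutation lemma
  have hperm : ∑ i ∈ Finset.Icc 1 (b - 1),
      (((i * m % b : ℕ) : ℚ) ^ 2 / (2 * b) - ((i * m % b : ℕ) : ℚ) / 2)
      = ∑ i ∈ Finset.Icc 1 (b - 1), ((i : ℚ) ^ 2 / (2 * b) - (i : ℚ) / 2) :=
    sum_mod_perm b m (by omega) h (fun x => (x : ℚ) ^ 2 / (2 * b) - (x : ℚ) / 2)
  rw [hperm] at hstep2
  have hcomb : (∑ i ∈ Finset.Icc 1 (b - 1), ((i : ℚ) ^ 2 / (2 * b) - (i : ℚ) / 2))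
        + ∑ i ∈ Finset.Icc 1 (b - 1),
          ((m : ℚ) ^ 2 * i / 2 - (m : ℚ) ^ 2 * (i : ℚ) ^ 2 / (2 * b))
      = ((1 - (m : ℚ) ^ 2) / (2 * b)) * (∑ i ∈ Finset.Icc 1 (b - 1), (i : ℚ) ^ 2)
        + (((m : ℚ) ^ 2 - 1) / 2) * ∑ i ∈ Finset.Icc 1 (b - 1), (i : ℚ) := by
    rw [Finset.mul_sum, Finset.mul_sum, ← Finset.sum_add_distrib,
      ← Finset.sum_add_distrib]
    exact Finset.sum_congr rfl fun i _ => by ring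
  rw [hcomb] at hstep2
  -- Gauss sums over Icc 1 (b-1)
  have hIcc : Finset.Icc 1 (b - 1) = Finset.Ico 1 b := by
    rw [← Finset.Ico_add_one_right_eq_Icc]
    congr 1
    omega
  have hsum1 : ∑ i ∈ Finset.Icc 1 (b - 1), (i : ℚ) = b * ((b : ℚ) - 1) / 2 := by
    rw [hIcc, Finset.sum_Ico_eq_sub _ (by omega : 1 ≤ b), sum_cast_id]
    simp
  have hsum2 : ∑ i ∈ Finset.Icc 1 (b - 1), (i : ℚ) ^ 2
      = b * ((b : ℚ) - 1) * (2 * (b : ℚ) - 1) / 6 := by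
    rw [hIcc, Finset.sum_Ico_eq_sub _ (by omega : 1 ≤ b), sum_cast_sq]
    simp
  rw [hsum1, hsum2] at hstep2
  have hmQ : (m : ℚ) = (n : ℚ) + 1 := by rw [hm]; push_cast; ring
  rw [hmQ] at hstep2
  have hEq : (n : ℚ) * ((b : ℚ) ^ 2 - 1) * ((n : ℚ) + 2) / 24
        + (n : ℚ) * ((b : ℚ) ^ 2 - 1) * ((n : ℚ) + 2) / 24
      = ((1 - ((n : ℚ) + 1) ^ 2) / (2 * b)) * (b * ((b : ℚ) - 1) * (2 * (b : ℚ) - 1) / 6)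
        + ((((n : ℚ) + 1) ^ 2 - 1) / 2) * (b * ((b : ℚ) - 1) / 2) := by
    field_simp
    ring
  linarith [hstep2, hEq]
end

section
/- For every odd positive integer n, (n+1) * ( (1/2)*(1/8)^2 + sum_{i=1}^{(n+1)/2} ((4i^2 - 1)/8)^2 ) = (3n^2 + 12n + 4)(n+4)(n+2)(n+1)n / 1920. -/
lemma sum_sq_zise_aux (m : ℕ) :
    ∑ i ∈ Finset.Icc 1 m, ((4 * (i : ℚ) ^ 2 - 1) / 8) ^ 2
      = (16 * ((m:ℚ) * (m+1) * (2*m+1) * (3*(m:ℚ)^2 + 3*m - 1) / 30)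
          - 8 * ((m:ℚ) * (m+1) * (2*m+1) / 6) + m) / 64 := by
  induction m with
  | zero => simp
  | succ k ih =>
    rw [Finset.sum_Icc_succ_top (by omega), ih]
    push_cast
    ring

/-- For odd `n`:
`(n+1)((1/2)(1/8)² + ∑_{i=1}^{(n+1)/2} ((4i²-1)/8)²) = (3n²+12n+4)(n+4)(n+2)(n+1)n/1920`. -/
theorem sum_sq_zise_odd (n : ℕ) (hn : Odd n) :
    ((n : ℚ) + 1) *
        ((1 / 2) * (1 / 8) ^ 2
          + ∑ i ∈ Finset.Icc 1 ((n + 1) / 2), ((4 * (i : ℚ) ^ 2 - 1) / 8) ^ 2)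
      = (3 * (n : ℚ) ^ 2 + 12 * n + 4) * ((n : ℚ) + 4) * ((n : ℚ) + 2) * ((n : ℚ) + 1) * n
          / 1920 := by
  obtain ⟨k, rfl⟩ := hn
  have h : (2 * k + 1 + 1) / 2 = k + 1 := by omega
  rw [h, sum_sq_zise_aux]
  push_cast
  ring
end

section
/- For every integer n >= 2 with n not congruent to 1 mod 3, sum_{i=0}^{n-2-floor((n-1)/3)} 4*pent(i) + 8*pent(n-1-floor((n-1)/3)) + sum_{i=n-floor((n-1)/3)}^{2n-2-2*floor((n-1)/3)} 4 * ((1 + (-1)^(i-n+floor((n-1)/3)))/2) * pent(i) = 4*n*(n+1)*(n+2)/6, where pent(i) = (1/2)*(3*floor((i+1)/2)^2 + (-1)^i * floor((i+1)/2)). -/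
/-- The `i`-th generalized pentagonal number
`pent i = (1/2)(3⌊(i+1)/2⌋² + (-1)^i ⌊(i+1)/2⌋)`. -/
def pent (i : ℕ) : ℚ :=
  (1 / 2) * (3 * (((i + 1) / 2 : ℕ) : ℚ) ^ 2 + (-1) ^ i * (((i + 1) / 2 : ℕ) : ℚ))
lemma pent_even (j : ℕ) : pent (2*j) = (3*(j:ℚ)^2 + j)/2 := by
  unfold pent
  have h : (2*j+1)/2 = j := by omega
  have h2 : ((-1:ℚ))^(2*j) = 1 := by rw [pow_mul]; norm_num
  rw [h, h2]; ring

lemma pent_odd (j : ℕ) : pent (2*j+1) = (3*((j:ℚ)+1)^2 - ((j:ℚ)+1))/2 := by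
  unfold pent
  have h : (2*j+1+1)/2 = j+1 := by omega
  have h2 : ((-1:ℚ))^(2*j+1) = -1 := by rw [pow_succ, pow_mul]; norm_num
  rw [h, h2]; push_cast; ring

lemma sum_range_even (k : ℕ) :
    ∑ i ∈ Finset.range (2*k), pent i
      = ((k:ℚ)*((k:ℚ)-1)*(2*(k:ℚ)-1) + 3*(k:ℚ)^2 - k)/2 := by
  induction k with
  | zero => simp
  | succ k ih =>
    have : 2*(k+1) = 2*k + 1 + 1 := by ring
    rw [this, Finset.sum_range_succ, Finset.sum_range_succ, ih, pent_even, pent_odd]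
    push_cast; ring

lemma third_odd (b k : ℕ) :
    ∑ j ∈ Finset.range (2*k), ((1+(-1:ℚ)^j)/2) * pent (2*b+1+j)
      = (3*(((b:ℚ)+k)*((b:ℚ)+k+1)*(2*(b:ℚ)+2*k+1) - (b:ℚ)*((b:ℚ)+1)*(2*(b:ℚ)+1))/6
          - (((b:ℚ)+k)*((b:ℚ)+k+1) - (b:ℚ)*((b:ℚ)+1))/2)/2 := by
  induction k with
  | zero => simp
  | succ k ih =>
    have e : 2*(k+1) = 2*k + 1 + 1 := by ring
    rw [e, Finset.sum_range_succ, Finset.sum_range_succ, ih]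
    have e1 : 2*b+1+2*k = 2*(b+k)+1 := by ring
    have e2 : ((-1:ℚ))^(2*k) = 1 := by rw [pow_mul]; norm_num
    have e3 : ((-1:ℚ))^(2*k+1) = -1 := by rw [pow_succ, e2]; norm_num
    rw [e1, pent_odd, e2, e3]
    push_cast; ring

lemma third_even (b k : ℕ) :
    ∑ j ∈ Finset.range (2*k+1), ((1+(-1:ℚ)^j)/2) * pent (2*b+j)
      = (3*(((b:ℚ)+k)*((b:ℚ)+k+1)*(2*(b:ℚ)+2*k+1) - ((b:ℚ)-1)*(b:ℚ)*(2*(b:ℚ)-1))/6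
          + (((b:ℚ)+k)*((b:ℚ)+k+1) - ((b:ℚ)-1)*(b:ℚ))/2)/2 := by
  induction k with
  | zero =>
    simp [pent_even]
    ring
  | succ k ih =>
    have e : 2*(k+1)+1 = (2*k+1) + 1 + 1 := by ring
    rw [e, Finset.sum_range_succ, Finset.sum_range_succ, ih]
    have e1 : 2*b+(2*k+1+1) = 2*(b+k+1) := by ring
    have e2 : ((-1:ℚ))^(2*k+1+1) = 1 := by
      have : 2*k+1+1 = 2*(k+1) := by ring
      rw [this, pow_mul]; norm_num
    have e3 : ((-1:ℚ))^(2*k+1) = -1 := by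
      rw [pow_succ, pow_mul]; norm_num
    rw [e1, pent_even, e2, e3]
    push_cast; ring

/-- Pentagonal-number identity for the 3-fold dilated alcove of affine `D_n`,
`n ≢ 1 (mod 3)`. -/
theorem pent_sum_identity_typeD (n : ℕ) (hn : 2 ≤ n) (h3 : n % 3 ≠ 1) :
    (∑ i ∈ Finset.range (n - 2 - (n - 1) / 3 + 1), 4 * pent i)
      + 8 * pent (n - 1 - (n - 1) / 3)
      + ∑ i ∈ Finset.Icc (n - (n - 1) / 3) (2 * n - 2 - 2 * ((n - 1) / 3)),
          4 * ((1 + (-1 : ℚ) ^ (i - (n - (n - 1) / 3))) / 2) * pent i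
      = 4 * (n : ℚ) * ((n : ℚ) + 1) * ((n : ℚ) + 2) / 6 := by
  obtain ⟨k, hk⟩ : ∃ k, n = 3*k ∨ n = 3*k+2 := ⟨n/3, by omega⟩
  rcases hk with h | h <;> subst h
  · -- n = 3k, k ≥ 1
    have hk1 : 1 ≤ k := by omega
    have e1 : 3*k - 2 - (3*k - 1) / 3 + 1 = 2*k := by omega
    have e2 : 3*k - 1 - (3*k - 1) / 3 = 2*k := by omega
    have e3 : 3*k - (3*k - 1) / 3 = 2*k+1 := by omega
    have e4 : 2*(3*k) - 2 - 2*((3*k - 1)/3) = 4*k := by omega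
    rw [e1, e2, e3, e4, ← Finset.Ico_add_one_right_eq_Icc, Finset.sum_Ico_eq_sum_range]
    have e5 : 4*k+1 - (2*k+1) = 2*k := by omega
    rw [e5]
    have hT : ∑ j ∈ Finset.range (2*k),
        4 * ((1 + (-1:ℚ) ^ (2*k+1+j - (2*k+1))) / 2) * pent (2*k+1+j)
        = 4 * ∑ j ∈ Finset.range (2*k), ((1+(-1:ℚ)^j)/2) * pent (2*k+1+j) := by
      rw [Finset.mul_sum]
      refine Finset.sum_congr rfl fun j _ => ?_
      have : 2*k+1+j - (2*k+1) = j := by omega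
      rw [this]; ring
    rw [hT, third_odd k k, ← Finset.mul_sum, sum_range_even, pent_even]
    push_cast; ring
  · -- n = 3k+2
    have e1 : 3*k+2 - 2 - (3*k+2 - 1) / 3 + 1 = 2*k+1 := by omega
    have e2 : 3*k+2 - 1 - (3*k+2 - 1) / 3 = 2*k+1 := by omega
    have e3 : 3*k+2 - (3*k+2 - 1) / 3 = 2*k+2 := by omega
    have e4 : 2*(3*k+2) - 2 - 2*((3*k+2 - 1)/3) = 4*k+2 := by omega
    rw [e1, e2, e3, e4, ← Finset.Ico_add_one_right_eq_Icc, Finset.sum_Ico_eq_sum_range]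
    have e5 : 4*k+2+1 - (2*k+2) = 2*k+1 := by omega
    rw [e5]
    have hT : ∑ j ∈ Finset.range (2*k+1),
        4 * ((1 + (-1:ℚ) ^ (2*k+2+j - (2*k+2))) / 2) * pent (2*k+2+j)
        = 4 * ∑ j ∈ Finset.range (2*k+1), ((1+(-1:ℚ)^j)/2) * pent (2*(k+1)+j) := by
      rw [Finset.mul_sum]
      refine Finset.sum_congr rfl fun j _ => ?_
      have h1 : 2*k+2+j - (2*k+2) = j := by omega
      have h2 : 2*k+2+j = 2*(k+1)+j := by ring
      rw [h1, h2]; ring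
    rw [hT, third_even (k+1) k, Finset.sum_range_succ, ← Finset.mul_sum,
      sum_range_even, pent_even, pent_odd]
    push_cast; ring
end

section
/- For every integer n >= 4 with n congruent to 1 mod 3, sum_{i=0}^{(n-4)/3} 8*(3*binomial(i+1,2) + 1/3) + 12*(3*binomial((n-1)/3 + 1, 2) + 1/3) + sum_{i=(n+2)/3}^{(2n-2)/3} 4*(3*binomial(i+1,2) + 1/3) = 4*n*(n+1)*(n+2)/6. -/
lemma ch_aux (m : ℕ) : (((m + 1).choose 2 : ℕ) : ℚ) = m * (m + 1) / 2 := by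
  induction m with
  | zero => simp
  | succ k ih =>
    rw [show k + 1 + 1 = (k + 1) + 1 from rfl, Nat.choose_succ_succ]
    push_cast [Nat.choose_one_right] at *
    rw [ih]; ring

lemma S_aux (N : ℕ) :
    (∑ i ∈ Finset.range N, (((i + 1).choose 2 : ℕ) : ℚ))
      = (N : ℚ) * ((N : ℚ) - 1) * ((N : ℚ) + 1) / 6 := by
  induction N with
  | zero => simp
  | succ k ih =>
    rw [Finset.sum_range_succ, ih, ch_aux]
    push_cast; ring

lemma expand_aux (c : ℚ) (N : ℕ) :
    (∑ i ∈ Finset.range N, c * (3 * (((i + 1).choose 2 : ℕ) : ℚ) + 1 / 3))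
      = c * (3 * ((N : ℚ) * ((N : ℚ) - 1) * ((N : ℚ) + 1) / 6) + (N : ℚ) / 3) := by
  rw [← Finset.mul_sum, Finset.sum_add_distrib, ← Finset.mul_sum, S_aux,
    Finset.sum_const, Finset.card_range]
  ring

lemma key_aux (j : ℕ) :
    (∑ i ∈ Finset.range (j + 1), 8 * (3 * (((i + 1).choose 2 : ℕ) : ℚ) + 1 / 3))
      + 12 * (3 * (((j + 2).choose 2 : ℕ) : ℚ) + 1 / 3)
      + ∑ i ∈ Finset.Icc (j + 2) (2 * j + 2),
          4 * (3 * (((i + 1).choose 2 : ℕ) : ℚ) + 1 / 3)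
      = 4 * ((3 * j + 4 : ℕ) : ℚ) * (((3 * j + 4 : ℕ) : ℚ) + 1)
          * (((3 * j + 4 : ℕ) : ℚ) + 2) / 6 := by
  have hIcc : (∑ i ∈ Finset.Icc (j + 2) (2 * j + 2),
      4 * (3 * (((i + 1).choose 2 : ℕ) : ℚ) + 1 / 3))
      = (∑ i ∈ Finset.range (2 * j + 3), 4 * (3 * (((i + 1).choose 2 : ℕ) : ℚ) + 1 / 3))
        - ∑ i ∈ Finset.range (j + 2), 4 * (3 * (((i + 1).choose 2 : ℕ) : ℚ) + 1 / 3) := by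
    rw [← Finset.Ico_add_one_right_eq_Icc, Finset.sum_Ico_eq_sub _ (by omega)]
    rfl
  rw [hIcc, expand_aux, expand_aux, expand_aux, ch_aux]
  push_cast; ring

/-- Identity for the sum of `zise` over the 3-fold dilated alcove of affine `D_n`,
for `n ≡ 1 (mod 3)`, `n ≥ 4`. -/
theorem binom3_sum_identity_typeD (n : ℕ) (hn : 4 ≤ n) (h3 : n % 3 = 1) :
    (∑ i ∈ Finset.range ((n - 4) / 3 + 1), 8 * (3 * (((i + 1).choose 2 : ℕ) : ℚ) + 1 / 3))
      + 12 * (3 * ((((n - 1) / 3 + 1).choose 2 : ℕ) : ℚ) + 1 / 3)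
      + ∑ i ∈ Finset.Icc ((n + 2) / 3) ((2 * n - 2) / 3),
          4 * (3 * (((i + 1).choose 2 : ℕ) : ℚ) + 1 / 3)
      = 4 * (n : ℚ) * ((n : ℚ) + 1) * ((n : ℚ) + 2) / 6 := by
  obtain ⟨j, rfl⟩ : ∃ j, n = 3 * j + 4 := ⟨(n - 4) / 3, by omega⟩
  have h1 : (3 * j + 4 - 4) / 3 + 1 = j + 1 := by omega
  have h2 : (3 * j + 4 - 1) / 3 + 1 = j + 2 := by omega
  have h3' : (3 * j + 4 + 2) / 3 = j + 2 := by omega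
  have h4 : (2 * (3 * j + 4) - 2) / 3 = 2 * j + 2 := by omega
  rw [h1, h2, h3', h4, key_aux]
end

section
/- Let a >= 2 and b be coprime. The number of (2, b)-cores (for b odd) equals (b+1)/2, and the sum of their sizes equals sum_{i=0}^{(b-1)/2} binomial(i+1, 2), which equals (b-1)(b+1)(b+3)/48. -/
/-- The hook length of the cell `(i, j)` in a Young diagram. -/
def YoungDiagram.hookLength (μ : YoungDiagram) (i j : ℕ) : ℕ :=
  (μ.rowLen i - j) + (μ.colLen j - i) - 1

/-- A Young diagram is an `a`-core if none of its hook lengths is divisible by `a`. -/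
def YoungDiagram.IsCore (μ : YoungDiagram) (a : ℕ) : Prop :=
  ∀ i j : ℕ, (i, j) ∈ μ → ¬ a ∣ μ.hookLength i j

/-- The staircase Young diagram `(k, k-1, …, 1)`. -/
def staircase (k : ℕ) : YoungDiagram where
  cells := (Finset.range k).biUnion fun i => (Finset.range (k - i)).image fun j => (i, j)
  isLowerSet := by
    rintro ⟨i1, j1⟩ ⟨i2, j2⟩ ⟨hi, hj⟩ h
    simp only [Finset.mem_coe, Finset.mem_biUnion, Finset.mem_range, Finset.mem_image,
      Prod.mk.injEq] at h ⊢
    obtain ⟨a, ha, b₀, hb₀, h1, h2⟩ := h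
    subst h1; subst h2
    exact ⟨i2, by omega, j2, by omega, rfl, rfl⟩

theorem mem_staircase {k i j : ℕ} : (i, j) ∈ staircase k ↔ i + j < k := by
  rw [← YoungDiagram.mem_cells]
  simp only [staircase, Finset.mem_biUnion, Finset.mem_range, Finset.mem_image,
    Prod.mk.injEq]
  constructor
  · rintro ⟨a, ha, b₀, hb₀, rfl, rfl⟩; omega
  · intro h; exact ⟨i, by omega, j, by omega, rfl, rfl⟩

theorem staircase_rowLen (k i : ℕ) : (staircase k).rowLen i = k - i := by
  have h : ∀ j, j < (staircase k).rowLen i ↔ i + j < k := fun j => by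
    rw [← YoungDiagram.mem_iff_lt_rowLen, mem_staircase]
  rcases Nat.lt_trichotomy ((staircase k).rowLen i) (k - i) with hlt | he | hgt
  · have := (h ((staircase k).rowLen i)).2 (by omega); omega
  · exact he
  · have := (h (k - i)).1 (by omega); omega

theorem staircase_colLen (k j : ℕ) : (staircase k).colLen j = k - j := by
  have h : ∀ i, i < (staircase k).colLen j ↔ i + j < k := fun i => by
    rw [← YoungDiagram.mem_iff_lt_colLen, mem_staircase]
  rcases Nat.lt_trichotomy ((staircase k).colLen j) (k - j) with hlt | he | hgt
  · have := (h ((staircase k).colLen j)).2 (by omega); omega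
  · exact he
  · have := (h (k - j)).1 (by omega); omega

theorem staircase_hook {k i j : ℕ} (h : i + j < k) :
    (staircase k).hookLength i j = 2 * (k - i - j) - 1 := by
  rw [YoungDiagram.hookLength, staircase_rowLen, staircase_colLen]
  omega

theorem staircase_isCore_two (k : ℕ) : (staircase k).IsCore 2 := by
  intro i j hm
  rw [mem_staircase] at hm
  rw [staircase_hook hm]
  omega

theorem staircase_isCore_of {b k : ℕ} (h : 2 * k ≤ b) : (staircase k).IsCore b := by
  intro i j hm hdvd
  rw [mem_staircase] at hm
  rw [staircase_hook hm] at hdvd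
  have := Nat.eq_zero_of_dvd_of_lt hdvd (by omega)
  omega

theorem staircase_not_core {b c k : ℕ} (hb : b = 2 * c + 1) (hk : c < k) :
    ¬ (staircase k).IsCore b := by
  intro h
  have hm : (0, k - c - 1) ∈ staircase k := mem_staircase.2 (by omega)
  have := h 0 (k - c - 1) hm
  rw [staircase_hook (mem_staircase.1 hm)] at this
  exact this ⟨1, by omega⟩

theorem rowLen_step (μ : YoungDiagram) (h2 : μ.IsCore 2) (i : ℕ) (hi : 0 < μ.rowLen i) :
    μ.rowLen (i + 1) + 1 = μ.rowLen i := by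
  have hsr : μ.rowLen (i + 1) ≤ μ.rowLen i := μ.rowLen_anti i (i + 1) (by omega)
  rcases Nat.lt_trichotomy (μ.rowLen (i + 1) + 1) (μ.rowLen i) with hlt | he | hgt
  · -- row lengths differ by at least 2
    exfalso
    set s := μ.rowLen (i + 1) with hs
    have hm1 : (i, s) ∈ μ := YoungDiagram.mem_iff_lt_rowLen.2 (by omega)
    have hm2 : (i, s + 1) ∈ μ := YoungDiagram.mem_iff_lt_rowLen.2 (by omega)
    have hc1 : i < μ.colLen s := YoungDiagram.mem_iff_lt_colLen.1 hm1
    have hc2 : i < μ.colLen (s + 1) := YoungDiagram.mem_iff_lt_colLen.1 hm2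
    have hn1 : ¬ (i + 1, s) ∈ μ := by
      rw [YoungDiagram.mem_iff_lt_rowLen]; omega
    have hn2 : ¬ (i + 1, s + 1) ∈ μ := by
      rw [YoungDiagram.mem_iff_lt_rowLen]
      have := μ.rowLen_anti (i + 1) (i + 1) le_rfl
      omega
    rw [YoungDiagram.mem_iff_lt_colLen] at hn1 hn2
    have hd1 := h2 i s hm1
    have hd2 := h2 i (s + 1) hm2
    rw [YoungDiagram.hookLength] at hd1 hd2
    omega
  · exact he
  · -- equal row lengths
    exfalso
    set r := μ.rowLen i with hr
    have heq : μ.rowLen (i + 1) = r := by omega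
    have hm1 : (i, r - 1) ∈ μ := YoungDiagram.mem_iff_lt_rowLen.2 (by omega)
    have hm2 : (i + 1, r - 1) ∈ μ := YoungDiagram.mem_iff_lt_rowLen.2 (by omega)
    have hc1 : i < μ.colLen (r - 1) := YoungDiagram.mem_iff_lt_colLen.1 hm1
    have hc2 : i + 1 < μ.colLen (r - 1) := YoungDiagram.mem_iff_lt_colLen.1 hm2
    have hd1 := h2 i (r - 1) hm1
    have hd2 := h2 (i + 1) (r - 1) hm2
    rw [YoungDiagram.hookLength] at hd1 hd2
    rw [heq] at hd2
    omega

theorem eq_staircase (μ : YoungDiagram) (h2 : μ.IsCore 2) : μ = staircase (μ.rowLen 0) := by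
  have hrow : ∀ i, μ.rowLen i = μ.rowLen 0 - i := by
    intro i
    induction i with
    | zero => simp
    | succ n ih =>
      rcases Nat.eq_zero_or_pos (μ.rowLen n) with h0 | hpos
      · have := μ.rowLen_anti n (n + 1) (by omega); omega
      · have := rowLen_step μ h2 n hpos; omega
  ext ⟨i, j⟩
  rw [YoungDiagram.mem_cells, YoungDiagram.mem_cells, mem_staircase,
    YoungDiagram.mem_iff_lt_rowLen, hrow i]
  omega

theorem staircase_injective : Function.Injective staircase := by
  intro k k' h
  have := staircase_rowLen k 0
  rw [h, staircase_rowLen] at this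
  omega

theorem choose_two_mul_two (n : ℕ) : (n + 1).choose 2 * 2 = (n + 1) * n := by
  rw [Nat.choose_two_right]
  have h : 2 ∣ (n + 1) * n := by
    rcases Nat.even_or_odd n with he | ho
    · exact Dvd.dvd.mul_left he.two_dvd _
    · exact Dvd.dvd.mul_right (ho.add_one.two_dvd) _
  simpa using Nat.div_mul_cancel h

theorem staircase_card (k : ℕ) : (staircase k).card = (k + 1).choose 2 := by
  have hcard : (staircase k).card = ∑ i ∈ Finset.range k, (k - i) := by
    rw [YoungDiagram.card]
    show ((Finset.range k).biUnion fun i =>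
        (Finset.range (k - i)).image fun j => (i, j)).card = _
    rw [Finset.card_biUnion]
    · refine Finset.sum_congr rfl fun i _ => ?_
      have hinj : Function.Injective (fun j => ((i, j) : ℕ × ℕ)) := by
        intro a b h; simpa using h
      rw [Finset.card_image_of_injective _ hinj, Finset.card_range]
    · intro x _ y _ hxy
      simp only [Finset.disjoint_left, Finset.mem_image, Finset.mem_range]
      rintro a ⟨b, hb, rfl⟩ ⟨b', hb', h⟩
      obtain ⟨h1, h2⟩ : y = x ∧ b' = b := by simpa using h
      exact hxy h1.symm
  rw [hcard]
  have h1 : ∑ i ∈ Finset.range k, (k - i) = ∑ i ∈ Finset.range k, (i + 1) := by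
    rw [← Finset.sum_range_reflect]
    exact Finset.sum_congr rfl fun i hi => by
      rw [Finset.mem_range] at hi; omega
  have h2 : ∑ i ∈ Finset.range (k + 1), i = ∑ i ∈ Finset.range k, (i + 1) := by
    rw [Finset.sum_range_succ']; simp
  have h5 := (Finset.sum_range_id_mul_two (k + 1)).trans (choose_two_mul_two k).symm
  omega

theorem sum_choose_q (c : ℕ) :
    ∑ i ∈ Finset.range (c + 1), (((i + 1).choose 2 : ℕ) : ℚ)
      = (c : ℚ) * ((c : ℚ) + 1) * ((c : ℚ) + 2) / 6 := by
  induction c with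
  | zero => simp
  | succ n ih =>
    rw [Finset.sum_range_succ, ih]
    have h : (((n + 2).choose 2 : ℕ) : ℚ) = ((n : ℚ) + 2) * ((n : ℚ) + 1) / 2 := by
      have := choose_two_mul_two (n + 1)
      have hq : (((n + 2).choose 2 : ℕ) : ℚ) * 2 = ((n : ℚ) + 2) * ((n : ℚ) + 1) := by
        exact_mod_cast congrArg (Nat.cast : ℕ → ℚ) this
      linarith
    have h2 : ((n : ℕ) + 1 + 1 : ℕ) = (n + 2 : ℕ) := by omega
    push_cast
    push_cast at h
    rw [show ((n : ℚ) + 1 + 1) = ((n : ℚ) + 2) by ring] at *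
    nlinarith [h]

/-- For odd `b`, there are `(b+1)/2` simultaneous `(2,b)`-cores, the sum of their
sizes equals `∑_{i=0}^{(b-1)/2} C(i+1,2)`, which equals `(b-1)(b+1)(b+3)/48`. -/
theorem two_b_cores (b : ℕ) (hb : Odd b) :
    Nat.card {μ : YoungDiagram | μ.IsCore 2 ∧ μ.IsCore b} = (b + 1) / 2 ∧
    (∑ᶠ μ ∈ {μ : YoungDiagram | μ.IsCore 2 ∧ μ.IsCore b}, (μ.card : ℚ))
      = ∑ i ∈ Finset.range ((b - 1) / 2 + 1), (((i + 1).choose 2 : ℕ) : ℚ) ∧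
    (∑ i ∈ Finset.range ((b - 1) / 2 + 1), (((i + 1).choose 2 : ℕ) : ℚ))
      = ((b : ℚ) - 1) * ((b : ℚ) + 1) * ((b : ℚ) + 3) / 48 := by
  obtain ⟨c, hc⟩ := hb
  have hb2 : b = 2 * c + 1 := by omega
  have hbc : (b - 1) / 2 = c := by omega
  have hS : {μ : YoungDiagram | μ.IsCore 2 ∧ μ.IsCore b}
      = ↑((Finset.range (c + 1)).map ⟨staircase, staircase_injective⟩) := by
    ext μ
    simp only [Set.mem_setOf_eq, Finset.coe_map, Set.mem_image, Finset.mem_coe,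
      Finset.mem_range, Function.Embedding.coeFn_mk]
    constructor
    · rintro ⟨h2, hbcore⟩
      refine ⟨μ.rowLen 0, ?_, (eq_staircase μ h2).symm⟩
      by_contra hk
      rw [eq_staircase μ h2] at hbcore
      exact staircase_not_core hb2 (by omega) hbcore
    · rintro ⟨k, hk, rfl⟩
      exact ⟨staircase_isCore_two k, staircase_isCore_of (by omega)⟩
  refine ⟨?_, ?_, ?_⟩
  · rw [hS, Nat.card_coe_set_eq, Set.ncard_coe_finset, Finset.card_map,
      Finset.card_range]
    omega
  · rw [hS, finsum_mem_coe_finset, Finset.sum_map, hbc]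
    refine Finset.sum_congr rfl fun i _ => ?_
    simp only [Function.Embedding.coeFn_mk, staircase_card]
  · rw [hbc, sum_choose_q, hb2]
    push_cast
    ring
end
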